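/- Let a, b, c be three points in Euclidean space ℝ^d, each distinct from the origin o, such that all three angles ∠aob, ∠boc, ∠coa are at least 120°. Then ∠aob = ∠boc = ∠coa = 120°, and the points a, b, c, o all lie in a common 2-dimensional affine plane. -/

import Mathlib

open Real InnerProductGeometry

theorem three_vectors_angles_120 (d : ℕ) (a b c : EuclideanSpace ℝ (Fin d))
    (ha : a ≠ 0) (hb : b ≠ 0) (hc : c ≠ 0)
    (hab : 2 * π / 3 ≤ angle a b) (hbc : 2 * π / 3 ≤ angle b c)
    (hca : 2 * π / 3 ≤ angle c a) :
    angle a b = 2 * π / 3 ∧ angle b c = 2 * π / 3 ∧ angle c a = 2 * π / 3 ∧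
      ∃ P : Submodule ℝ (EuclideanSpace ℝ (Fin d)),
        Module.finrank ℝ P ≤ 2 ∧ a ∈ P ∧ b ∈ P ∧ c ∈ P := by
  have hπ := Real.pi_pos
  have hcos23 : Real.cos (2 * π / 3) = -(1/2) := by
    have h : 2 * π / 3 = π - π / 3 := by ring
    rw [h, Real.cos_pi_sub, Real.cos_pi_div_three]
  have hna : ‖a‖ ≠ 0 := norm_ne_zero_iff.2 ha
  have hnb : ‖b‖ ≠ 0 := norm_ne_zero_iff.2 hb
  have hnc : ‖c‖ ≠ 0 := norm_ne_zero_iff.2 hc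
  set u := ‖a‖⁻¹ • a with hu
  set v := ‖b‖⁻¹ • b with hv
  set w := ‖c‖⁻¹ • c with hw
  have hnu : ‖u‖ = 1 := by rw [hu, norm_smul]; simp [abs_of_nonneg (inv_nonneg.2 (norm_nonneg a)), inv_mul_cancel₀ hna]
  have hnv : ‖v‖ = 1 := by rw [hv, norm_smul]; simp [abs_of_nonneg (inv_nonneg.2 (norm_nonneg b)), inv_mul_cancel₀ hnb]
  have hnw : ‖w‖ = 1 := by rw [hw, norm_smul]; simp [abs_of_nonneg (inv_nonneg.2 (norm_nonneg c)), inv_mul_cancel₀ hnc]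
  have hau : angle u v = angle a b := by
    rw [hu, hv, angle_smul_left_of_pos _ _ (by positivity), angle_smul_right_of_pos _ _ (by positivity)]
  have hbv : angle v w = angle b c := by
    rw [hv, hw, angle_smul_left_of_pos _ _ (by positivity), angle_smul_right_of_pos _ _ (by positivity)]
  have hcw : angle w u = angle c a := by
    rw [hw, hu, angle_smul_left_of_pos _ _ (by positivity), angle_smul_right_of_pos _ _ (by positivity)]
  have inner_eq : ∀ x y : EuclideanSpace ℝ (Fin d), ‖x‖ = 1 → ‖y‖ = 1 →
      (inner ℝ x y : ℝ) = Real.cos (angle x y) := by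
    intro x y hx hy
    rw [InnerProductGeometry.cos_angle, hx, hy]
    simp
  have hle : ∀ x y : EuclideanSpace ℝ (Fin d), 2 * π / 3 ≤ angle x y →
      Real.cos (angle x y) ≤ -(1/2) := by
    intro x y h
    rw [← hcos23]
    exact Real.cos_le_cos_of_nonneg_of_le_pi (by positivity) (angle_le_pi x y) h
  have huv : (inner ℝ u v : ℝ) ≤ -(1/2) := by rw [inner_eq u v hnu hnv, hau]; exact hle a b hab
  have hvw : (inner ℝ v w : ℝ) ≤ -(1/2) := by rw [inner_eq v w hnv hnw, hbv]; exact hle b c hbc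
  have hwu : (inner ℝ w u : ℝ) ≤ -(1/2) := by rw [inner_eq w u hnw hnu, hcw]; exact hle c a hca
  have hexp : ‖u + v + w‖ ^ 2 =
      3 + 2 * ((inner ℝ u v : ℝ) + (inner ℝ v w : ℝ) + (inner ℝ w u : ℝ)) := by
    have h1 : ‖u + v + w‖ ^ 2 = (inner ℝ (u + v + w) (u + v + w) : ℝ) :=
      (real_inner_self_eq_norm_sq _).symm
    rw [h1]
    simp only [inner_add_left, inner_add_right, real_inner_self_eq_norm_sq, hnu, hnv, hnw,
      real_inner_comm v u, real_inner_comm w v, real_inner_comm u w]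
    ring
  have hnn : 0 ≤ ‖u + v + w‖ ^ 2 := sq_nonneg _
  have huv' : (inner ℝ u v : ℝ) = -(1/2) := by linarith [hnn, hexp, huv, hvw, hwu]
  have hvw' : (inner ℝ v w : ℝ) = -(1/2) := by linarith [hnn, hexp, huv, hvw, hwu]
  have hwu' : (inner ℝ w u : ℝ) = -(1/2) := by linarith [hnn, hexp, huv, hvw, hwu]
  have hsum : u + v + w = 0 := by
    have : ‖u + v + w‖ ^ 2 = 0 := by rw [hexp, huv', hvw', hwu']; ring
    exact norm_eq_zero.1 (pow_eq_zero_iff two_ne_zero |>.1 this)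
  have hangle : ∀ x y : EuclideanSpace ℝ (Fin d), Real.cos (angle x y) = -(1/2) →
      angle x y = 2 * π / 3 := by
    intro x y h
    refine Real.injOn_cos ⟨angle_nonneg x y, angle_le_pi x y⟩
      ⟨by positivity, by linarith⟩ ?_
    rw [h, hcos23]
  have e1 : angle a b = 2 * π / 3 := by
    apply hangle; rw [← hau, ← inner_eq u v hnu hnv]; exact huv'
  have e2 : angle b c = 2 * π / 3 := by
    apply hangle; rw [← hbv, ← inner_eq v w hnv hnw]; exact hvw'
  have e3 : angle c a = 2 * π / 3 := by
    apply hangle; rw [← hcw, ← inner_eq w u hnw hnu]; exact hwu'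
  refine ⟨e1, e2, e3, Submodule.span ℝ {a, b}, ?_, ?_, ?_, ?_⟩
  · classical
    have := finrank_span_le_card (R := ℝ) ({a, b} : Set (EuclideanSpace ℝ (Fin d)))
    refine this.trans ?_
    rw [Set.toFinset_insert, Set.toFinset_singleton]
    exact (Finset.card_insert_le _ _).trans (by simp)
  · exact Submodule.subset_span (by simp)
  · exact Submodule.subset_span (by simp)
  · have hc' : c = ‖c‖ • w := by rw [hw, smul_smul, mul_inv_cancel₀ hnc, one_smul]
    have hw' : w = -u - v := by
      have := hsum
      linear_combination (norm := module) this
    rw [hc', hw', hu, hv]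
    have haP : a ∈ Submodule.span ℝ ({a, b} : Set (EuclideanSpace ℝ (Fin d))) :=
      Submodule.subset_span (by simp)
    have hbP : b ∈ Submodule.span ℝ ({a, b} : Set (EuclideanSpace ℝ (Fin d))) :=
      Submodule.subset_span (by simp)
    have : (‖c‖ : ℝ) • (-(‖a‖⁻¹ • a) - ‖b‖⁻¹ • b) =
        (-(‖c‖ * ‖a‖⁻¹)) • a + (-(‖c‖ * ‖b‖⁻¹)) • b := by module
    rw [this]
    exact Submodule.add_mem _ (Submodule.smul_mem _ _ haP) (Submodule.smul_mem _ _ hbP)
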